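/- Let K = ℚ(q) be the field of rational functions over ℚ and let bar : K → K denote the unique ℚ-algebra automorphism with q ↦ q^{−1}, extended coefficientwise to power series in K[[z]]. Define ξ(z) = exp( −Σ_{n ≥ 1} (1/n) · q^{2n}/(1 + q^{2n}) · zⁿ ) ∈ K[[z]] (this is the series (q²z; q⁴)_∞ / (q⁴z; q⁴)_∞). Then ξ(z) · bar(ξ(z)) = 1 − z; equivalently, bar(ξ(z)) = (1 − z)/ξ(z). -/

import Mathlib

open PowerSeries

/-- The coefficientwise (product) topology on `K[[z]]` for `K = ℚ(q)`: the product topology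
on the coefficient functions, with each (discrete) coefficient space `K`. -/
noncomputable instance ratFuncPowerSeriesTopology :
    TopologicalSpace (PowerSeries (RatFunc ℚ)) :=
  @Pi.topologicalSpace (Unit →₀ ℕ) (fun _ => RatFunc ℚ) (fun _ => ⊥)

/-- The exponential of a formal power series over `ℚ(q)`, `exp F = ∑_{n ≥ 0} Fⁿ/n!`,
defined as an infinite sum in the coefficientwise topology. -/
noncomputable def psExp (F : PowerSeries (RatFunc ℚ)) : PowerSeries (RatFunc ℚ) :=
  ∑' n : ℕ, (n.factorial : ℚ)⁻¹ • F ^ n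

/-- The series `ξ(z) = exp( −∑_{n ≥ 1} (1/n) · q^{2n}/(1 + q^{2n}) · zⁿ ) ∈ ℚ(q)[[z]]`,
i.e. `(q²z; q⁴)_∞ / (q⁴z; q⁴)_∞`. -/
noncomputable def xiSeries : PowerSeries (RatFunc ℚ) :=
  psExp (- ∑' n : ℕ,
    PowerSeries.C
        (((n : RatFunc ℚ) + 1)⁻¹ * RatFunc.X ^ (2 * (n + 1)) *
          (1 + RatFunc.X ^ (2 * (n + 1)))⁻¹) *
      PowerSeries.X ^ (n + 1))

/-! ### Auxiliary development -/

namespace XiAux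

open Finset Filter

local notation "K" => RatFunc ℚ

noncomputable instance ratSMulK : SMul ℚ K := Algebra.toSMul

theorem cast_add_one_ne_zero' (n : ℕ) : ((n : RatFunc ℚ) + 1) ≠ 0 := by
  have h : ((n : RatFunc ℚ) + 1) = algebraMap ℚ (RatFunc ℚ) ((n : ℚ) + 1) := by
    rw [map_add, map_natCast, map_one]
  rw [h]
  intro hz
  have h2 := (algebraMap ℚ (RatFunc ℚ)).injective (hz.trans (map_zero _).symm)
  exact Nat.cast_add_one_ne_zero n h2

noncomputable instance : TopologicalSpace (RatFunc ℚ) := ⊥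

instance : DiscreteTopology (RatFunc ℚ) := ⟨rfl⟩

instance : T2Space (PowerSeries (RatFunc ℚ)) :=
  inferInstanceAs (T2Space ((Unit →₀ ℕ) → RatFunc ℚ))

theorem hasSum_of_coeff {ι : Type} {f : ι → PowerSeries K} {S : PowerSeries K}
    (h : ∀ d : ℕ, ∃ s : Finset ι, (∀ i ∉ s, coeff (R := K) d (f i) = 0) ∧
      ∑ i ∈ s, coeff (R := K) d (f i) = coeff (R := K) d S) :
    HasSum f S := by
  show Tendsto (fun t : Finset ι => ∑ i ∈ t, f i) atTop (nhds S)
  refine tendsto_pi_nhds.mpr fun d => ?_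
  rw [Finsupp.unique_single d]
  show Tendsto (fun t : Finset ι => coeff (R := K) (d ()) (∑ i ∈ t, f i)) atTop
      (nhds (coeff (R := K) (d ()) S))
  obtain ⟨s, hs0, hs1⟩ := h (d ())
  refine tendsto_nhds_of_eventually_eq ?_
  filter_upwards [eventually_ge_atTop s] with t hts
  rw [map_sum, ← hs1]
  exact (Finset.sum_subset hts fun i _ hi => hs0 i hi).symm

theorem tsum_eq_of_coeff {ι : Type} {f : ι → PowerSeries K} {S : PowerSeries K}
    (h : ∀ d : ℕ, ∃ s : Finset ι, (∀ i ∉ s, coeff (R := K) d (f i) = 0) ∧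
      ∑ i ∈ s, coeff (R := K) d (f i) = coeff (R := K) d S) :
    ∑' i, f i = S :=
  (hasSum_of_coeff h).tsum_eq

theorem coeff_pow_eq_zero {F : PowerSeries K} (hF : constantCoeff (R := K) F = 0)
    {d n : ℕ} (h : d < n) : coeff (R := K) d (F ^ n) = 0 := by
  have hd : (X : PowerSeries K) ^ n ∣ F ^ n := pow_dvd_pow_of_dvd (X_dvd_iff.mpr hF) n
  exact X_pow_dvd_iff.mp hd d h

theorem coeff_pow_mul_pow_eq_zero {F G : PowerSeries K}
    (hF : constantCoeff (R := K) F = 0) (hG : constantCoeff (R := K) G = 0)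
    {d n m : ℕ} (h : d < n + m) : coeff (R := K) d (F ^ n * G ^ m) = 0 := by
  have hd : (X : PowerSeries K) ^ (n + m) ∣ F ^ n * G ^ m := by
    rw [pow_add]
    exact mul_dvd_mul (pow_dvd_pow_of_dvd (X_dvd_iff.mpr hF) n)
      (pow_dvd_pow_of_dvd (X_dvd_iff.mpr hG) m)
  exact X_pow_dvd_iff.mp hd d h

theorem psExp_eq_mk {F : PowerSeries K} (hF : constantCoeff (R := K) F = 0) :
    psExp F = mk fun d => ∑ n ∈ range (d + 1), (n.factorial : ℚ)⁻¹ • coeff (R := K) d (F ^ n) := by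
  refine tsum_eq_of_coeff fun d => ⟨range (d + 1), ?_, ?_⟩
  · intro n hn
    rw [coeff_smul, coeff_pow_eq_zero hF
      (by simp only [Finset.mem_range, not_lt] at hn; omega), smul_zero]
  · rw [coeff_mk]
    exact Finset.sum_congr rfl fun n _ => by rw [coeff_smul]

theorem coeff_psExp_le {F : PowerSeries K} (hF : constantCoeff (R := K) F = 0) {j d : ℕ}
    (hjd : j ≤ d) :
    coeff (R := K) j (psExp F) =
      coeff (R := K) j (∑ n ∈ range (d + 1), (n.factorial : ℚ)⁻¹ • F ^ n) := by
  rw [psExp_eq_mk hF, coeff_mk, map_sum]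
  simp only [coeff_smul]
  refine Finset.sum_subset (Finset.range_subset_range.mpr (show j + 1 ≤ d + 1 by omega))
    fun n _ hn' => ?_
  rw [coeff_pow_eq_zero hF
    (by simp only [Finset.mem_range, not_lt] at hn'; omega), smul_zero]

theorem constantCoeff_psExp {F : PowerSeries K} (hF : constantCoeff (R := K) F = 0) :
    constantCoeff (R := K) (psExp F) = 1 := by
  rw [← coeff_zero_eq_constantCoeff_apply, psExp_eq_mk hF, coeff_mk,
    Finset.sum_range_one, pow_zero, Nat.factorial_zero, Nat.cast_one, inv_one, one_smul,
    coeff_zero_eq_constantCoeff_apply, map_one]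

theorem choose_factorial_aux {k m : ℕ} (h : m ≤ k) :
    (k.factorial : ℚ)⁻¹ * (k.choose m : ℚ) =
      ((m.factorial : ℚ) * ((k - m).factorial : ℚ))⁻¹ := by
  have h1 : ((k.choose m : ℚ)) * m.factorial * (k - m).factorial = k.factorial := by
    exact_mod_cast congrArg (Nat.cast (R := ℚ)) (Nat.choose_mul_factorial_mul_factorial h)
  have h2 : (k.factorial : ℚ) ≠ 0 := Nat.cast_ne_zero.mpr k.factorial_ne_zero
  have h3 : (m.factorial : ℚ) ≠ 0 := Nat.cast_ne_zero.mpr m.factorial_ne_zero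
  have h4 : (((k - m).factorial : ℚ)) ≠ 0 := Nat.cast_ne_zero.mpr (k - m).factorial_ne_zero
  field_simp
  linear_combination h1

theorem psExp_mul {F G : PowerSeries K} (hF : constantCoeff (R := K) F = 0)
    (hG : constantCoeff (R := K) G = 0) : psExp F * psExp G = psExp (F + G) := by
  have hFG : constantCoeff (R := K) (F + G) = 0 := by rw [map_add, hF, hG, add_zero]
  ext d
  have key : coeff (R := K) d (psExp F * psExp G) =
      coeff (R := K) d ((∑ n ∈ range (d + 1), (n.factorial : ℚ)⁻¹ • F ^ n) *
        (∑ n ∈ range (d + 1), (n.factorial : ℚ)⁻¹ • G ^ n)) := by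
    rw [coeff_mul, coeff_mul]
    refine Finset.sum_congr rfl fun p hp => ?_
    rw [Finset.HasAntidiagonal.mem_antidiagonal] at hp
    rw [coeff_psExp_le hF (show p.1 ≤ d by omega), coeff_psExp_le hG (show p.2 ≤ d by omega)]
  rw [key, coeff_psExp_le hFG (le_refl d)]
  -- expand the left side
  have expandL : coeff (R := K) d ((∑ n ∈ range (d + 1), (n.factorial : ℚ)⁻¹ • F ^ n) *
        (∑ n ∈ range (d + 1), (n.factorial : ℚ)⁻¹ • G ^ n)) =
      ∑ p ∈ (range (d + 1) ×ˢ range (d + 1)),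
        ((p.1.factorial : ℚ) * (p.2.factorial : ℚ))⁻¹ • coeff (R := K) d (F ^ p.1 * G ^ p.2) := by
    rw [Finset.sum_mul_sum, Finset.sum_product]
    rw [map_sum]
    refine Finset.sum_congr rfl fun n _ => ?_
    rw [map_sum]
    refine Finset.sum_congr rfl fun m _ => ?_
    rw [smul_mul_smul_comm, coeff_smul, mul_inv]
  rw [expandL]
  -- restrict to the triangle
  rw [← Finset.sum_filter_of_ne (p := fun p : ℕ × ℕ => p.1 + p.2 ≤ d)
    (fun p _ hne => by
      by_contra hgt
      exact hne (by rw [coeff_pow_mul_pow_eq_zero hF hG (by omega), smul_zero]))]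
  -- expand the right side
  have expandR : coeff (R := K) d (∑ n ∈ range (d + 1), (n.factorial : ℚ)⁻¹ • (F + G) ^ n) =
      ∑ k ∈ range (d + 1), ∑ m ∈ range (k + 1),
        ((m.factorial : ℚ) * ((k - m).factorial : ℚ))⁻¹ •
          coeff (R := K) d (F ^ m * G ^ (k - m)) := by
    rw [map_sum]
    refine Finset.sum_congr rfl fun k hk => ?_
    rw [coeff_smul, add_pow, map_sum]
    simp only [Algebra.smul_def]
    rw [Finset.mul_sum]
    refine Finset.sum_congr rfl fun m hm => ?_
    rw [Finset.mem_range] at hm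
    rw [← map_natCast (C (R := K)) (k.choose m), coeff_mul_C,
      show ((k.choose m : ℕ) : RatFunc ℚ) = algebraMap ℚ (RatFunc ℚ) ((k.choose m : ℕ) : ℚ) from
        (map_natCast _ _).symm,
      mul_comm ((coeff (R := K) d) (F ^ m * G ^ (k - m))) _, ← mul_assoc, ← map_mul,
      choose_factorial_aux (show m ≤ k by omega)]
  rw [expandR]
  -- reindex the triangle
  rw [Finset.sum_sigma']
  refine (Finset.sum_nbij' (fun x : Σ _ : ℕ, ℕ => ((x.2, x.1 - x.2) : ℕ × ℕ))
    (fun p : ℕ × ℕ => (⟨p.1 + p.2, p.1⟩ : Σ _ : ℕ, ℕ)) ?_ ?_ ?_ ?_ ?_).symm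
  · intro x hx
    simp only [Finset.mem_sigma, Finset.mem_range] at hx
    simp only [Finset.mem_filter, Finset.mem_product, Finset.mem_range]
    omega
  · intro p hp
    simp only [Finset.mem_filter, Finset.mem_product, Finset.mem_range] at hp
    simp only [Finset.mem_sigma, Finset.mem_range]
    omega
  · intro x hx
    simp only [Finset.mem_sigma, Finset.mem_range] at hx
    simp only []
    congr 1 <;> omega
  · intro p hp
    simp only [Finset.mem_filter, Finset.mem_product, Finset.mem_range] at hp
    simp only []
    congr 1 <;> omega
  · intro x hx
    rfl

theorem tsum_C_mul_X_pow (a : ℕ → K) :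
    (∑' n : ℕ, (C (R := K) (a n) * X ^ (n + 1) : PowerSeries K)) =
      mk fun d => match d with
        | 0 => 0
        | (m + 1) => a m := by
  refine tsum_eq_of_coeff fun d => ?_
  match d with
  | 0 =>
    refine ⟨∅, fun i _ => ?_, by simp [coeff_mk]⟩
    rw [coeff_C_mul, coeff_X_pow, if_neg (by omega), mul_zero]
  | (m + 1) =>
    refine ⟨{m}, fun i hi => ?_, ?_⟩
    · rw [Finset.mem_singleton] at hi
      rw [coeff_C_mul, coeff_X_pow, if_neg (by omega), mul_zero]
    · rw [Finset.sum_singleton, coeff_C_mul, coeff_X_pow, if_pos rfl, mul_one, coeff_mk]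

theorem map_psExp (f : RatFunc ℚ →+* RatFunc ℚ)
    (hf : ∀ x : ℚ, f (algebraMap ℚ K x) = algebraMap ℚ K x)
    {F : PowerSeries K} (hF : constantCoeff (R := K) F = 0) :
    PowerSeries.map f (psExp F) = psExp (PowerSeries.map f F) := by
  have hF' : constantCoeff (R := K) (PowerSeries.map f F) = 0 := by
    rw [← coeff_zero_eq_constantCoeff_apply, coeff_map,
      coeff_zero_eq_constantCoeff_apply, hF, map_zero]
  rw [psExp_eq_mk hF, psExp_eq_mk hF']
  ext d
  rw [coeff_map, coeff_mk, coeff_mk, map_sum]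
  refine Finset.sum_congr rfl fun n _ => ?_
  rw [Algebra.smul_def, Algebra.smul_def, map_mul, hf, ← map_pow, ← coeff_map]

theorem derivative_rat_smul (a : ℚ) (F : PowerSeries K) :
    PowerSeries.derivative K (a • F) = a • PowerSeries.derivative K F := by
  have h : ∀ G : PowerSeries K, a • G = (algebraMap ℚ K a) • G := fun G => by
    ext d
    rw [coeff_smul, coeff_smul, Algebra.smul_def, smul_eq_mul]
  rw [h, h, Derivation.map_smul]

theorem derivative_psExp {F : PowerSeries K} (hF : constantCoeff (R := K) F = 0) :
    PowerSeries.derivative K (psExp F) = PowerSeries.derivative K F * psExp F := by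
  ext d
  have hEd : PowerSeries.derivative K (∑ n ∈ range (d + 2), (n.factorial : ℚ)⁻¹ • F ^ n) =
      PowerSeries.derivative K F * ∑ n ∈ range (d + 1), (n.factorial : ℚ)⁻¹ • F ^ n := by
    rw [map_sum, Finset.sum_range_succ']
    have h0 : PowerSeries.derivative K ((Nat.factorial 0 : ℚ)⁻¹ • F ^ 0) = 0 := by
      rw [derivative_rat_smul, pow_zero]
      simp
    rw [h0, add_zero, Finset.mul_sum]
    refine Finset.sum_congr rfl fun m _ => ?_
    rw [derivative_rat_smul, Derivation.leibniz_pow, Nat.add_sub_cancel, smul_eq_mul,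
      ← Nat.cast_smul_eq_nsmul ℚ, smul_smul]
    have hs : ((m + 1).factorial : ℚ)⁻¹ * ((m + 1 : ℕ) : ℚ) = (m.factorial : ℚ)⁻¹ := by
      rw [Nat.factorial_succ]
      have h2 : (m.factorial : ℚ) ≠ 0 := Nat.cast_ne_zero.mpr m.factorial_ne_zero
      have h3 : ((m : ℚ) + 1) ≠ 0 := Nat.cast_add_one_ne_zero m
      push_cast
      field_simp
    rw [hs, mul_smul_comm, mul_comm (F ^ m)]
  rw [coeff_derivative, coeff_psExp_le hF (show d + 1 ≤ d + 1 by omega), ← coeff_derivative, hEd,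
    coeff_mul, coeff_mul]
  refine Finset.sum_congr rfl fun p hp => ?_
  rw [Finset.HasAntidiagonal.mem_antidiagonal] at hp
  rw [coeff_psExp_le hF (show p.2 ≤ d by omega)]

/-- The series `∑_{n ≥ 1} -(1/n) zⁿ = log(1-z)`. -/
noncomputable def Mser : PowerSeries K :=
  mk fun d => match d with
    | 0 => 0
    | (m + 1) => -((m : K) + 1)⁻¹

theorem constantCoeff_Mser : constantCoeff (R := K) Mser = 0 := by
  rw [← coeff_zero_eq_constantCoeff_apply, Mser, coeff_mk]

theorem coeff_derivative_Mser (d : ℕ) :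
    coeff (R := K) d (PowerSeries.derivative K Mser) = -1 := by
  rw [coeff_derivative, Mser, coeff_mk]
  show -((d : K) + 1)⁻¹ * ((d : K) + 1) = -1
  have h : ((d : K) + 1) ≠ 0 := cast_add_one_ne_zero' d
  field_simp

theorem psExp_Mser : psExp Mser = 1 - X := by
  have hE := derivative_psExp constantCoeff_Mser
  have hrec : ∀ d : ℕ, coeff (R := K) (d + 1) (psExp Mser) * ((d : K) + 1) =
      - ∑ j ∈ range (d + 1), coeff (R := K) j (psExp Mser) := by
    intro d
    have h1 := congrArg (coeff (R := K) d) hE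
    rw [coeff_derivative] at h1
    rw [h1, coeff_mul]
    have h2 : ∀ p ∈ antidiagonal d,
        coeff (R := K) p.1 (PowerSeries.derivative K Mser) * coeff (R := K) p.2 (psExp Mser) =
          -coeff (R := K) p.2 (psExp Mser) := fun p _ => by
      rw [coeff_derivative_Mser, neg_one_mul]
    rw [Finset.sum_congr rfl h2, Finset.sum_neg_distrib]
    congr 1
    rw [Finset.Nat.sum_antidiagonal_eq_sum_range_succ
      (fun _ j => coeff (R := K) j (psExp Mser))]
    conv_rhs => rw [← Finset.sum_range_reflect]
    simp only [Nat.add_sub_cancel]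
  have hc0 : coeff (R := K) 0 (psExp Mser) = 1 := by
    rw [coeff_zero_eq_constantCoeff_apply, constantCoeff_psExp constantCoeff_Mser]
  have hS : ∀ d : ℕ, ∑ j ∈ range (d + 1), coeff (R := K) j (psExp Mser) =
      if d = 0 then 1 else 0 := by
    intro d
    induction d with
    | zero => simpa using hc0
    | succ n ih =>
      have h := hrec n
      rw [ih] at h
      have hn0 : ((n : K) + 1) ≠ 0 := cast_add_one_ne_zero' n
      have hcn : coeff (R := K) (n + 1) (psExp Mser) = -(if n = 0 then 1 else 0) / ((n : K) + 1) := by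
        field_simp
        linear_combination h
      rw [Finset.sum_range_succ, ih, hcn]
      rcases Nat.eq_zero_or_pos n with hn | hn
      · subst hn; norm_num
      · have hne : n ≠ 0 := by omega
        simp [hne]
  ext d
  match d with
  | 0 =>
    rw [hc0]
    simp
  | 1 =>
    have h := hrec 0
    rw [hS 0] at h
    simp only [Nat.cast_zero, zero_add, mul_one, if_pos rfl] at h
    rw [h]
    simp
  | (n + 2) =>
    have h := hrec (n + 1)
    rw [hS (n + 1)] at h
    simp only [if_neg (Nat.succ_ne_zero n), neg_zero] at h
    have hn0 : (((n + 1 : ℕ) : K) + 1) ≠ 0 := cast_add_one_ne_zero' (n + 1)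
    have : coeff (R := K) (n + 2) (psExp Mser) = 0 := by
      have := mul_eq_zero.mp h
      tauto
    rw [this]
    rw [map_sub, coeff_one, coeff_X, if_neg (by omega), if_neg (by omega), sub_zero]

/-- The coefficients of the log of `ξ`. -/
noncomputable def cfun (n : ℕ) : K :=
  ((n : K) + 1)⁻¹ * RatFunc.X ^ (2 * (n + 1)) * (1 + RatFunc.X ^ (2 * (n + 1)))⁻¹

/-- `A = log ξ`. -/
noncomputable def Aser : PowerSeries K :=
  -(mk fun d => match d with
    | 0 => 0
    | (m + 1) => cfun m)

theorem xiSeries_eq : xiSeries = psExp Aser := by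
  unfold xiSeries
  rw [tsum_C_mul_X_pow (fun n => ((n : K) + 1)⁻¹ * RatFunc.X ^ (2 * (n + 1)) *
    (1 + RatFunc.X ^ (2 * (n + 1)))⁻¹)]
  rfl

theorem coeff_Aser (d : ℕ) :
    coeff (R := K) d Aser = -(match d with | 0 => (0 : K) | (m + 1) => cfun m) := by
  rw [Aser, map_neg, coeff_mk]

theorem constantCoeff_Aser : constantCoeff (R := K) Aser = 0 := by
  rw [← coeff_zero_eq_constantCoeff_apply, coeff_Aser]
  simp

theorem one_add_X_pow_ne_zero (m : ℕ) (hm : m ≠ 0) : (1 + RatFunc.X ^ m : K) ≠ 0 := by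
  have heq : (1 + RatFunc.X ^ m : K) = algebraMap (Polynomial ℚ) K (1 + Polynomial.X ^ m) := by
    rw [map_add, map_one, map_pow, RatFunc.algebraMap_X]
  rw [heq]
  refine RatFunc.algebraMap_ne_zero ?_
  intro h
  have := congrArg (Polynomial.eval 0) h
  simp [zero_pow hm] at this

end XiAux

open XiAux Finset in
/-- Let `bar` be the (unique) `ℚ`-algebra endomorphism of `K = ℚ(q)` with
`q ↦ q⁻¹`, extended coefficientwise to `K[[z]]`.  Then
`ξ(z) · bar(ξ(z)) = 1 − z`, i.e. `bar(ξ(z)) = (1 − z)/ξ(z)`. -/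
theorem xi_mul_bar_xi (bar : RatFunc ℚ →ₐ[ℚ] RatFunc ℚ)
    (hbar : bar RatFunc.X = RatFunc.X⁻¹) :
    xiSeries * PowerSeries.map bar.toRingHom xiSeries = 1 - PowerSeries.X := by
  have hkey : ∀ n : ℕ, cfun n + bar (cfun n) = ((n : RatFunc ℚ) + 1)⁻¹ := by
    intro n
    have hX : (RatFunc.X : RatFunc ℚ) ≠ 0 := RatFunc.X_ne_zero
    have hm : 2 * (n + 1) ≠ 0 := by omega
    have h1 : (1 + RatFunc.X ^ (2 * (n + 1)) : RatFunc ℚ) ≠ 0 := one_add_X_pow_ne_zero _ hm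
    have hn1 : ((n : RatFunc ℚ) + 1) ≠ 0 := cast_add_one_ne_zero' n
    have hXp : (RatFunc.X : RatFunc ℚ) ^ (2 * (n + 1)) ≠ 0 := pow_ne_zero _ hX
    have hbar' : bar (cfun n) =
        ((n : RatFunc ℚ) + 1)⁻¹ * (RatFunc.X ^ (2 * (n + 1)))⁻¹ *
          (1 + (RatFunc.X ^ (2 * (n + 1)))⁻¹)⁻¹ := by
      rw [cfun, map_mul, map_mul, map_inv₀, map_add, map_natCast, map_one, map_pow, hbar,
        map_inv₀, map_add, map_one, map_pow, hbar, inv_pow]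
    have h3 : (1 + (RatFunc.X ^ (2 * (n + 1)))⁻¹ : RatFunc ℚ)⁻¹ =
        RatFunc.X ^ (2 * (n + 1)) * (1 + RatFunc.X ^ (2 * (n + 1)))⁻¹ := by
      rw [show (1 + (RatFunc.X ^ (2 * (n + 1)))⁻¹ : RatFunc ℚ) =
          (1 + RatFunc.X ^ (2 * (n + 1))) * (RatFunc.X ^ (2 * (n + 1)))⁻¹ by
        rw [add_mul, one_mul, mul_inv_cancel₀ hXp, add_comm]]
      rw [mul_inv, inv_inv, mul_comm]
    rw [hbar', h3, cfun]
    field_simp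
    ring
  have hA0 := constantCoeff_Aser
  have hA0' : constantCoeff (R := RatFunc ℚ) (PowerSeries.map bar.toRingHom Aser) = 0 := by
    rw [← coeff_zero_eq_constantCoeff_apply, PowerSeries.coeff_map,
      coeff_zero_eq_constantCoeff_apply, hA0, map_zero]
  have hsum : Aser + PowerSeries.map bar.toRingHom Aser = Mser := by
    ext d
    rw [map_add, PowerSeries.coeff_map, coeff_Aser, Mser, PowerSeries.coeff_mk]
    match d with
    | 0 => simp
    | (m + 1) =>
      show -cfun m + bar (-cfun m) = -((m : RatFunc ℚ) + 1)⁻¹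
      rw [map_neg]
      linear_combination -(hkey m)
  rw [xiSeries_eq, map_psExp bar.toRingHom (fun x => bar.commutes x) hA0,
    psExp_mul hA0 hA0', hsum, psExp_Mser]
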